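/- Let (𝒳, 𝒴) be a cotorsion theory in an abelian category 𝒜 such that 𝒜 has enough objects of the class of Y ∈ 𝒴 for which every short exact sequence starting with Y and ending in 𝒳 is left split, and suppose 𝒳 = ^⊥𝒮 for some class 𝒮 ⊆ 𝒴. Then the class ex(𝒳) of exact chain complexes with all entries in 𝒳 is the left class of a cotorsion theory in the category Ch(𝒜) of chain complexes: (ex(𝒳), ex(𝒳)^⊥) is a cotorsion theory. -/

import Mathlib

open CategoryTheory Limits

universe v' u' v u

section Perp

variable {𝒞 : Type u'} [Category.{v'} 𝒞] [Abelian 𝒞]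

/-- `Y ∈ rightPerpSplit K` iff every short exact sequence `Y ↣ E ↠ Q` with `Q ∈ K`
splits. -/
def rightPerpSplit (K : Set 𝒞) : Set 𝒞 :=
  {Y | ∀ ⦃E Q : 𝒞⦄ (i : Y ⟶ E) (p : E ⟶ Q) (w : i ≫ p = 0),
    (ShortComplex.mk i p w).ShortExact → Q ∈ K → ∃ r : E ⟶ Y, i ≫ r = 𝟙 Y}

/-- `X ∈ leftPerpSplit K` iff every short exact sequence `Y ↣ E ↠ X` with `Y ∈ K`
splits. -/
def leftPerpSplit (K : Set 𝒞) : Set 𝒞 :=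
  {X | ∀ ⦃Y E : 𝒞⦄ (i : Y ⟶ E) (p : E ⟶ X) (w : i ≫ p = 0),
    (ShortComplex.mk i p w).ShortExact → Y ∈ K → ∃ s : X ⟶ E, s ≫ p = 𝟙 X}

end Perp

variable {𝒜 : Type u} [Category.{v} 𝒜] [Abelian 𝒜]

/-- The class of acyclic (exact) complexes that are degreewise in `𝒳`. -/
def exCls (𝒳 : Set 𝒜) : Set (ChainComplex 𝒜 ℤ) :=
  {K | (∀ n : ℤ, K.ExactAt n) ∧ ∀ n : ℤ, K.X n ∈ 𝒳}

/-- `𝒴̲`: the objects `Y ∈ 𝒴` such that every exact sequence `Y ↣ A → X` with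
`X ∈ 𝒳` is left split. -/
def underline (𝒳 𝒴 : Set 𝒜) : Set 𝒜 :=
  {Y | Y ∈ 𝒴 ∧ ∀ ⦃A X : 𝒜⦄ (i : Y ⟶ A) (v : A ⟶ X) (w : i ≫ v = 0),
    Mono i → (ShortComplex.mk i v w).Exact → X ∈ 𝒳 → ∃ r : A ⟶ Y, i ≫ r = 𝟙 Y}

namespace Stmt16

open HomologicalComplex

noncomputable abbrev single𝒜 (k : ℤ) (Y : 𝒜) : ChainComplex 𝒜 ℤ :=
  (single 𝒜 (ComplexShape.down ℤ) k).obj Y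

/-- the "twist" map between components of two single complexes -/
noncomputable def tau (k : ℤ) (Y : 𝒜) (i j : ℤ) :
    (single𝒜 k Y).X i ⟶ (single𝒜 (k-1) Y).X j :=
  if h : i = k ∧ j = k - 1 then
    (singleObjXIsoOfEq (ComplexShape.down ℤ) k Y i h.1).hom ≫
      (singleObjXIsoOfEq (ComplexShape.down ℤ) (k-1) Y j h.2).inv
  else 0

lemma tau_self (k : ℤ) (Y : 𝒜) :
    tau k Y k (k-1) = (singleObjXSelf (ComplexShape.down ℤ) k Y).hom ≫
      (singleObjXSelf (ComplexShape.down ℤ) (k-1) Y).inv := by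
  simp only [tau, dif_pos (⟨rfl, rfl⟩ : k = k ∧ k - 1 = k - 1)]
  rfl

lemma tau_eq_zero (k : ℤ) (Y : 𝒜) {i j : ℤ} (h : ¬ (i = k ∧ j = k - 1)) :
    tau k Y i j = 0 := dif_neg h

lemma tau_natural {Y Y' : 𝒜} (g : Y ⟶ Y') (k i j : ℤ) :
    ((single 𝒜 (ComplexShape.down ℤ) k).map g).f i ≫ tau k Y' i j =
      tau k Y i j ≫ ((single 𝒜 (ComplexShape.down ℤ) (k-1)).map g).f j := by
  by_cases h : i = k ∧ j = k - 1
  · obtain ⟨rfl, rfl⟩ := h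
    rw [tau_self, tau_self, single_map_f_self, single_map_f_self]
    simp
  · rw [tau_eq_zero k Y' h, tau_eq_zero k Y h, zero_comp, comp_zero]

/-- The disk complex with `Y` in degrees `k` and `k-1`. -/
noncomputable def disk (k : ℤ) (Y : 𝒜) : ChainComplex 𝒜 ℤ where
  X m := (single𝒜 k Y).X m ⊞ (single𝒜 (k-1) Y).X m
  d i j := biprod.fst ≫ tau k Y i j ≫ biprod.inr
  shape i j h := by
    have ht : tau k Y i j = 0 :=
      tau_eq_zero k Y (by rintro ⟨rfl, rfl⟩; exact h (by simp))
    rw [ht, zero_comp, comp_zero]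
  d_comp_d' i j l _ _ := by simp

@[simp] lemma disk_X (k : ℤ) (Y : 𝒜) (m : ℤ) :
    (disk k Y).X m = ((single𝒜 k Y).X m ⊞ (single𝒜 (k-1) Y).X m) := rfl

@[simp] lemma disk_d (k : ℤ) (Y : 𝒜) (i j : ℤ) :
    (disk k Y).d i j = biprod.fst ≫ tau k Y i j ≫ biprod.inr := rfl

lemma isZero_disk_X (k : ℤ) (Y : 𝒜) (m : ℤ) (h1 : m ≠ k) (h2 : m ≠ k - 1) :
    IsZero ((disk k Y).X m) := by
  rw [disk_X, biprod_isZero_iff]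
  exact ⟨isZero_single_obj_X _ _ _ _ h1, isZero_single_obj_X _ _ _ _ h2⟩

/-- projection from the disk to the top sphere -/
noncomputable def diskπ (k : ℤ) (Y : 𝒜) : disk k Y ⟶ single𝒜 k Y where
  f m := biprod.fst
  comm' i j hij := by simp

/-- inclusion of the bottom sphere in the disk -/
noncomputable def diskι (k : ℤ) (Y : 𝒜) : single𝒜 (k-1) Y ⟶ disk k Y where
  f m := biprod.inr
  comm' i j hij := by simp

@[simp] lemma diskπ_f (k : ℤ) (Y : 𝒜) (m : ℤ) : (diskπ k Y).f m = biprod.fst := rfl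
@[simp] lemma diskι_f (k : ℤ) (Y : 𝒜) (m : ℤ) : (diskι k Y).f m = biprod.inr := rfl

lemma diskιπ_w (k : ℤ) (Y : 𝒜) : diskι k Y ≫ diskπ k Y = 0 := by
  ext
  simp

lemma diskSES (k : ℤ) (Y : 𝒜) :
    (ShortComplex.mk (diskι k Y) (diskπ k Y) (diskιπ_w k Y)).ShortExact := by
  rw [HomologicalComplex.shortExact_iff_degreewise_shortExact]
  intro m
  exact ShortComplex.Splitting.shortExact
    { r := biprod.snd
      s := biprod.inl
      f_r := by exact biprod.inr_snd
      s_g := by exact biprod.inl_fst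
      id := by rw [add_comm]; exact biprod.total }


section Isos

variable (k : ℤ) (Y : 𝒜)

lemma isZero_top_at_prev : IsZero ((single𝒜 k Y).X (k-1)) :=
  isZero_single_obj_X _ _ _ _ (by omega)

lemma isZero_bot_at_self : IsZero ((single𝒜 (k-1) Y).X k) :=
  isZero_single_obj_X _ _ _ _ (by omega)

/-- `(disk k Y).X k ≅ Y` -/
noncomputable def diskXIsoSelf : (disk k Y).X k ≅ Y where
  hom := biprod.fst ≫ (singleObjXSelf (ComplexShape.down ℤ) k Y).hom
  inv := (singleObjXSelf (ComplexShape.down ℤ) k Y).inv ≫ biprod.inl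
  hom_inv_id := by
    apply biprod.hom_ext
    · simp
    · apply (isZero_bot_at_self k Y).eq_of_tgt
  inv_hom_id := by simp

/-- `(disk k Y).X (k-1) ≅ Y` -/
noncomputable def diskXIsoPrev : (disk k Y).X (k-1) ≅ Y where
  hom := biprod.snd ≫ (singleObjXSelf (ComplexShape.down ℤ) (k-1) Y).hom
  inv := (singleObjXSelf (ComplexShape.down ℤ) (k-1) Y).inv ≫ biprod.inr
  hom_inv_id := by
    apply biprod.hom_ext
    · apply (isZero_top_at_prev k Y).eq_of_tgt
    · simp
  inv_hom_id := by simp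

lemma disk_d_comp_isoPrev :
    (disk k Y).d k (k-1) ≫ (diskXIsoPrev k Y).hom =
      biprod.fst ≫ (singleObjXSelf (ComplexShape.down ℤ) k Y).hom := by
  simp [diskXIsoPrev, tau_self]

end Isos

section Maps

variable (k : ℤ) {Y : 𝒜}

/-- Constructor for chain maps into the disk: any map `K.X (k-1) ⟶ Y` induces one. -/
noncomputable def toDisk {K : ChainComplex 𝒜 ℤ} (t : K.X (k-1) ⟶ Y) : K ⟶ disk k Y where
  f m := biprod.lift
    ((mkHomToSingle (K.d k (k-1) ≫ t) (fun i _ => by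
        rw [← Category.assoc, K.d_comp_d, zero_comp])).f m)
    (if h : m = k - 1 then
      (K.XIsoOfEq h).hom ≫ t ≫ (singleObjXIsoOfEq (ComplexShape.down ℤ) (k-1) Y m h).inv
     else 0)
  comm' i j hij := by
    dsimp only [disk_d, disk_X]
    apply biprod.hom_ext
    · simp only [Category.assoc, biprod.inr_fst, comp_zero, biprod.lift_fst]
      rw [← (mkHomToSingle (K.d k (k-1) ≫ t) _).comm i j]
      simp
    · simp only [Category.assoc, biprod.inr_snd, Category.comp_id, biprod.lift_fst_assoc,
        biprod.lift_snd]
      by_cases h : j = k - 1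
      · subst h
        obtain rfl : i = k := by
          have := hij; simp only [ComplexShape.down_Rel] at this; omega
        rw [dif_pos rfl, mkHomToSingle_f, tau_self]
        simp [singleObjXSelf]
      · rw [dif_neg h, tau_eq_zero k Y (by tauto), comp_zero, comp_zero]

lemma toDisk_f_prev {K : ChainComplex 𝒜 ℤ} (t : K.X (k-1) ⟶ Y) :
    (toDisk k t).f (k-1) ≫ (diskXIsoPrev k Y).hom = t := by
  simp [toDisk, diskXIsoPrev, singleObjXSelf]

end Maps

section DiskMap

variable (k : ℤ) {Y Y' : 𝒜}

/-- functoriality of the disk -/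
noncomputable def diskMap (g : Y ⟶ Y') : disk k Y ⟶ disk k Y' where
  f m := biprod.map (((single 𝒜 (ComplexShape.down ℤ) k).map g).f m)
    (((single 𝒜 (ComplexShape.down ℤ) (k-1)).map g).f m)
  comm' i j hij := by
    dsimp only [disk_d, disk_X]
    simp only [biprod.map_fst_assoc, Category.assoc, biprod.inr_map]
    rw [← Category.assoc (((single 𝒜 (ComplexShape.down ℤ) k).map g).f i), tau_natural]
    simp

@[simp] lemma diskMap_f (g : Y ⟶ Y') (m : ℤ) :
    (diskMap k g).f m = biprod.map (((single 𝒜 (ComplexShape.down ℤ) k).map g).f m)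
      (((single 𝒜 (ComplexShape.down ℤ) (k-1)).map g).f m) := rfl

lemma diskXIsoPrev_natural (g : Y ⟶ Y') :
    (diskMap k g).f (k-1) ≫ (diskXIsoPrev k Y').hom = (diskXIsoPrev k Y).hom ≫ g := by
  simp [diskXIsoPrev, single_map_f_self]

end DiskMap


section GeneralAbelian

variable {𝒞 : Type u'} [Category.{v'} 𝒞] [Abelian 𝒞]

lemma shortExact_of_isZero (S : ShortComplex 𝒞) (h1 : IsZero S.X₁) (h2 : IsZero S.X₂)
    (h3 : IsZero S.X₃) : S.ShortExact where
  exact := ShortComplex.exact_of_isZero_X₂ _ h2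
  mono_f := ⟨fun a b _ => h1.eq_of_tgt a b⟩
  epi_g := ⟨fun a b _ => h3.eq_of_src a b⟩

lemma shortExact_biprod {S T : ShortComplex 𝒞} (hS : S.ShortExact) (hT : T.ShortExact) :
    (ShortComplex.mk (biprod.map S.f T.f) (biprod.map S.g T.g)
      (by ext <;> simp [S.zero, T.zero])).ShortExact := by
  have hmono : Mono (biprod.map S.f T.f) := by
    have := hS.mono_f
    have := hT.mono_f
    refine ⟨fun {Z} a b hab => ?_⟩
    apply biprod.hom_ext
    · rw [← cancel_mono S.f]
      simpa using congrArg (fun t => t ≫ biprod.fst) hab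
    · rw [← cancel_mono T.f]
      simpa using congrArg (fun t => t ≫ biprod.snd) hab
  have hepi : Epi (biprod.map S.g T.g) := by
    have := hS.epi_g
    have := hT.epi_g
    refine ⟨fun {Z} a b hab => ?_⟩
    apply biprod.hom_ext'
    · rw [← cancel_epi S.g]
      simpa using congrArg (fun t => biprod.inl ≫ t) hab
    · rw [← cancel_epi T.g]
      simpa using congrArg (fun t => biprod.inr ≫ t) hab
  refine { mono_f := hmono, epi_g := hepi, exact := ?_ }
  -- exactness via kernel
  apply ShortComplex.exact_of_f_is_kernel
  refine KernelFork.IsLimit.ofι' _ _ (fun {Z} u hu => ?_)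
  have huS : (u ≫ biprod.fst) ≫ S.g = 0 := by
    simpa using congrArg (fun t => t ≫ biprod.fst) hu
  have huT : (u ≫ biprod.snd) ≫ T.g = 0 := by
    simpa using congrArg (fun t => t ≫ biprod.snd) hu
  obtain ⟨lS, hlS⟩ := KernelFork.IsLimit.lift' hS.fIsKernel (u ≫ biprod.fst) huS
  obtain ⟨lT, hlT⟩ := KernelFork.IsLimit.lift' hT.fIsKernel (u ≫ biprod.snd) huT
  refine ⟨biprod.lift lS lT, ?_⟩
  apply biprod.hom_ext
  · simpa using hlS
  · simpa using hlT

/-- pulling back a short exact sequence along a morphism -/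
lemma pullbackSES {A B C K : 𝒞} (i : A ⟶ B) (p : B ⟶ C) (w : i ≫ p = 0)
    (hse : (ShortComplex.mk i p w).ShortExact) (φ : K ⟶ C) :
    (ShortComplex.mk (pullback.lift i 0 (by simp [w]) : A ⟶ pullback p φ)
      (pullback.snd p φ) (by rw [pullback.lift_snd])).ShortExact := by
  have hepi : Epi (pullback.snd p φ) := by
    have : Epi p := hse.epi_g
    infer_instance
  have hmono : Mono (pullback.lift i 0 (by simp [w]) : A ⟶ pullback p φ) := by
    have h : Mono ((pullback.lift i 0 (by simp [w]) : A ⟶ pullback p φ) ≫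
        pullback.fst p φ) := by
      rw [pullback.lift_fst]
      exact hse.mono_f
    exact mono_of_mono _ (pullback.fst p φ)
  refine { mono_f := hmono, epi_g := hepi, exact := ?_ }
  apply ShortComplex.exact_of_f_is_kernel
  refine KernelFork.IsLimit.ofι' _ _ (fun {Z} u hu => ?_)
  have hu' : (u ≫ pullback.fst p φ) ≫ p = 0 := by
    rw [Category.assoc, pullback.condition, ← Category.assoc, hu, zero_comp]
  obtain ⟨l, hl⟩ := KernelFork.IsLimit.lift' hse.fIsKernel (u ≫ pullback.fst p φ) hu'
  refine ⟨l, ?_⟩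
  apply pullback.hom_ext
  · rw [Category.assoc, pullback.lift_fst]; exact hl
  · exact (Category.assoc _ _ _).trans <| (congrArg (l ≫ ·) (pullback.lift_snd (f := p) (g := φ) _ _ _)).trans (comp_zero.trans hu.symm)

end GeneralAbelian


section SingleSES

variable {A B C : 𝒜} {i₁ : A ⟶ B} {p₁ : B ⟶ C} {w₁ : i₁ ≫ p₁ = 0}

lemma single_comp_f (k m : ℤ) {P Q R : 𝒜} (f : P ⟶ Q) (g : Q ⟶ R) :
    ((single 𝒜 (ComplexShape.down ℤ) k).map f).f m ≫
      ((single 𝒜 (ComplexShape.down ℤ) k).map g).f m =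
      ((single 𝒜 (ComplexShape.down ℤ) k).map (f ≫ g)).f m := by
  rw [← HomologicalComplex.comp_f, ← Functor.map_comp]

lemma se_single_component (hse : (ShortComplex.mk i₁ p₁ w₁).ShortExact) (k m : ℤ) :
    (ShortComplex.mk (((single 𝒜 (ComplexShape.down ℤ) k).map i₁).f m)
      (((single 𝒜 (ComplexShape.down ℤ) k).map p₁).f m)
      (by rw [single_comp_f, w₁, Functor.map_zero, HomologicalComplex.zero_f])).ShortExact := by
  by_cases hm : m = k
  · subst hm
    refine ShortComplex.shortExact_of_iso (e := ?_) hse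
    refine ShortComplex.isoMk (singleObjXSelf (ComplexShape.down ℤ) m A).symm
      (singleObjXSelf (ComplexShape.down ℤ) m B).symm
      (singleObjXSelf (ComplexShape.down ℤ) m C).symm ?_ ?_
    · simp [single_map_f_self]
    · simp [single_map_f_self]
  · exact shortExact_of_isZero _
      (isZero_single_obj_X (ComplexShape.down ℤ) k A m hm)
      (isZero_single_obj_X (ComplexShape.down ℤ) k B m hm)
      (isZero_single_obj_X (ComplexShape.down ℤ) k C m hm)

lemma diskMap_w (k : ℤ) (h1 : i₁ ≫ p₁ = 0) : diskMap k i₁ ≫ diskMap k p₁ = 0 := by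
  ext m
  apply biprod.hom_ext
  · simp only [HomologicalComplex.comp_f, diskMap_f, Category.assoc, biprod.map_fst,
      HomologicalComplex.zero_f, zero_comp, disk_X, biprod.map_fst_assoc]
    rw [single_comp_f, h1, Functor.map_zero, HomologicalComplex.zero_f, comp_zero]; exact zero_comp.symm
  · simp only [HomologicalComplex.comp_f, diskMap_f, Category.assoc, biprod.map_snd,
      HomologicalComplex.zero_f, zero_comp, disk_X, biprod.map_snd_assoc]
    rw [single_comp_f, h1, Functor.map_zero, HomologicalComplex.zero_f, comp_zero]; exact zero_comp.symm

lemma diskMapSES (hse : (ShortComplex.mk i₁ p₁ w₁).ShortExact) (k : ℤ) :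
    (ShortComplex.mk (diskMap k i₁) (diskMap k p₁) (diskMap_w k w₁)).ShortExact := by
  rw [HomologicalComplex.shortExact_iff_degreewise_shortExact]
  intro m
  exact shortExact_biprod (se_single_component hse k m) (se_single_component hse (k-1) m)

end SingleSES


section DiskMem

lemma disk_mem (𝒳 : Set 𝒜) {k : ℤ} {Y : 𝒜} (hY : Y ∈ rightPerpSplit 𝒳) :
    disk k Y ∈ rightPerpSplit (exCls 𝒳) := by
  intro E Q i p w hse hQ
  have hdeg := (HomologicalComplex.shortExact_iff_degreewise_shortExact _).1 hse
  set i' : Y ⟶ E.X (k-1) := (diskXIsoPrev k Y).inv ≫ i.f (k-1) with hi'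
  have hwcomp : i.f (k-1) ≫ p.f (k-1) = 0 := by
    have := congrArg (fun (h : disk k Y ⟶ Q) => h.f (k-1)) w
    simpa using this
  have w' : i' ≫ p.f (k-1) = 0 := by
    rw [hi', Category.assoc, hwcomp, comp_zero]
  have hse' : (ShortComplex.mk i' (p.f (k-1)) w').ShortExact := by
    refine ShortComplex.shortExact_of_iso (e := ?_) (hdeg (k-1))
    exact ShortComplex.isoMk (diskXIsoPrev k Y) (Iso.refl _) (Iso.refl _)
      (by exact (Iso.hom_inv_id_assoc _ _).trans (Category.comp_id _).symm)
      (by exact (Category.id_comp _).trans (Category.comp_id _).symm)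
  obtain ⟨r₀, hr₀⟩ := hY i' (p.f (k-1)) w' hse' (hQ.2 (k-1))
  have hiprev : i.f (k-1) ≫ r₀ = (diskXIsoPrev k Y).hom := by
    have : (diskXIsoPrev k Y).hom ≫ i' = i.f (k-1) := by
      rw [hi', Iso.hom_inv_id_assoc]
    rw [← this, Category.assoc, hr₀, Category.comp_id]
  refine ⟨toDisk k r₀, ?_⟩
  ext m
  by_cases h1 : m = k
  · subst m
    apply biprod.hom_ext
    · simp only [HomologicalComplex.comp_f, HomologicalComplex.id_f, Category.assoc,
        Category.id_comp, disk_X]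
      have h2 : (toDisk k r₀).f k ≫ biprod.fst =
          (E.d k (k-1) ≫ r₀) ≫ (singleObjXSelf (ComplexShape.down ℤ) k Y).inv := by
        simp [toDisk]
      erw [Category.assoc, h2, ← Category.assoc, ← Category.assoc, i.comm k (k-1)]
      erw [Category.assoc, Category.assoc]
      erw [reassoc_of% hiprev, ← Category.assoc, disk_d_comp_isoPrev]
      simp
    · exact (isZero_bot_at_self k Y).eq_of_tgt _ _
  · by_cases h2 : m = k - 1
    · subst m
      apply biprod.hom_ext
      · exact (isZero_top_at_prev k Y).eq_of_tgt _ _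
      · simp only [HomologicalComplex.comp_f, HomologicalComplex.id_f, Category.assoc,
          Category.id_comp, disk_X]
        rw [← cancel_mono (singleObjXSelf (ComplexShape.down ℤ) (k-1) Y).hom]
        have hsnd : biprod.snd ≫ (singleObjXSelf (ComplexShape.down ℤ) (k-1) Y).hom =
            (diskXIsoPrev k Y).hom := rfl
        erw [Category.assoc, Category.assoc, hsnd, toDisk_f_prev, hiprev]
    · exact (isZero_disk_X k Y m h1 h2).eq_of_src _ _

end DiskMem


section SingleMem

open CategoryTheory.Abelian
open scoped Pseudoelement

lemma single_mem (𝒳 𝒴 : Set 𝒜) {k : ℤ} {Y : 𝒜} (hY : Y ∈ underline 𝒳 𝒴) :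
    single𝒜 k Y ∈ rightPerpSplit (exCls 𝒳) := by
  intro E Q i p w hse hQ
  have hdeg := (HomologicalComplex.shortExact_iff_degreewise_shortExact _).1 hse
  set σ := singleObjXSelf (ComplexShape.down ℤ) k Y with hσ
  set d1 : E.X (k+1) ⟶ E.X k := E.d (k+1) k with hd1
  set q : E.X k ⟶ cokernel d1 := cokernel.π d1 with hq
  set i₀ : Y ⟶ E.X k := σ.inv ≫ i.f k with hi₀
  have hwk : i.f k ≫ p.f k = 0 := by
    have := congrArg (fun (h : single𝒜 k Y ⟶ Q) => h.f k) w
    simpa using this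
  have hz : i₀ ≫ p.f k = 0 := by rw [hi₀, Category.assoc, hwk, comp_zero]
  have hvcond : d1 ≫ p.f k ≫ Q.d k (k-1) = 0 := by
    rw [hd1, ← Category.assoc, ← p.comm (k+1) k, Category.assoc, Q.d_comp_d, comp_zero]
  set v : cokernel d1 ⟶ Q.X (k-1) := cokernel.desc d1 (p.f k ≫ Q.d k (k-1)) hvcond with hv
  have hqv : q ≫ v = p.f k ≫ Q.d k (k-1) := cokernel.π_desc _ _ _
  have hw' : (i₀ ≫ q) ≫ v = 0 := by
    rw [Category.assoc, hqv, ← Category.assoc, hz, zero_comp]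
  haveI hmono_ifk : Mono (i.f k) := (hdeg k).mono_f
  haveI hmono_i₀ : Mono i₀ := by rw [hi₀]; exact mono_comp _ _
  haveI hepi_pk1 : Epi (p.f (k+1)) := (hdeg (k+1)).epi_g
  haveI hepi_pk2 : Epi (p.f (k+2)) := (hdeg (k+2)).epi_g
  have hEk1 : IsZero ((single𝒜 k Y).X (k+1)) :=
    isZero_single_obj_X (ComplexShape.down ℤ) k Y (k+1) (by omega)
  have hcoker : (ShortComplex.mk d1 q (cokernel.condition d1)).Exact :=
    ShortComplex.exact_of_g_is_cokernel _ (cokernelIsCokernel d1)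
  have hQex1 : (Q.sc' (k+2) (k+1) k).Exact :=
    (HomologicalComplex.exactAt_iff' (K := Q) (i := k+2) (j := k+1) (k := k)
      (by rw [ChainComplex.prev]; ring) (by rw [ChainComplex.next]; ring)).1 (hQ.1 (k+1))
  have hQex0 : (Q.sc' (k+1) k (k-1)).Exact :=
    (HomologicalComplex.exactAt_iff' (K := Q) (i := k+1) (j := k) (k := k-1)
      (by rw [ChainComplex.prev]) (by rw [ChainComplex.next])).1 (hQ.1 k)
  -- Mono (i₀ ≫ q)
  have hmono : Mono (i₀ ≫ q) := by
    apply Pseudoelement.mono_of_zero_of_map_zero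
    intro a ha
    have h1 : q (i₀ a) = 0 := by rw [← Pseudoelement.comp_apply]; exact ha
    obtain ⟨e, he0⟩ := Pseudoelement.pseudo_exact_of_exact hcoker (i₀ a) h1
    have he : d1 e = i₀ a := he0
    have h2 : (Q.d (k+1) k) ((p.f (k+1)) e) = 0 := by
      have e1 : (Q.d (k+1) k) ((p.f (k+1)) e) = (p.f k) (d1 e) := by
        rw [← Pseudoelement.comp_apply, ← Pseudoelement.comp_apply, hd1, ← p.comm (k+1) k]
      rw [e1, he, ← Pseudoelement.comp_apply, hz, Pseudoelement.zero_apply]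
    obtain ⟨x, hx0⟩ := Pseudoelement.pseudo_exact_of_exact hQex1 ((p.f (k+1)) e) h2
    have hx : (Q.d (k+2) (k+1)) x = (p.f (k+1)) e := hx0
    obtain ⟨e₂, he₂⟩ := Pseudoelement.pseudo_surjective_of_epi (p.f (k+2)) x
    have h3 : (p.f (k+1)) e = (p.f (k+1)) ((E.d (k+2) (k+1)) e₂) := by
      rw [← Pseudoelement.comp_apply, ← p.comm (k+2) (k+1), Pseudoelement.comp_apply, he₂, hx]
    obtain ⟨z, hz0, hzprop⟩ :=
      Pseudoelement.sub_of_eq_image (p.f (k+1)) e ((E.d (k+2) (k+1)) e₂) h3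
    have hd1z : d1 z = d1 e := by
      apply hzprop
      have hdd : E.d (k+2) (k+1) ≫ d1 = 0 := by rw [hd1]; exact E.d_comp_d _ _ _
      rw [← Pseudoelement.comp_apply, hdd, Pseudoelement.zero_apply]
    obtain ⟨s0, hs00⟩ := Pseudoelement.pseudo_exact_of_exact (hdeg (k+1)).exact z hz0
    have hs0 : (i.f (k+1)) s0 = z := hs00
    have hifz : (i.f (k+1)) = 0 := hEk1.eq_of_src _ _
    have hz00 : z = (0 : E.X (k+1)) := by rw [← hs0, hifz]; exact Pseudoelement.zero_apply _ _
    have hfin : i₀ a = (0 : E.X k) := by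
      rw [← he, ← hd1z, hz00, Pseudoelement.apply_zero]
    exact Pseudoelement.zero_of_map_zero i₀ (Pseudoelement.pseudo_injective_of_mono i₀) a hfin
  -- Exactness of Y ⟶ coker ⟶ Q.X (k-1)
  have hexact : (ShortComplex.mk (i₀ ≫ q) v hw').Exact := by
    apply Pseudoelement.exact_of_pseudo_exact
    intro b hb
    obtain ⟨e, he⟩ := Pseudoelement.pseudo_surjective_of_epi q b
    have h2 : (Q.d k (k-1)) ((p.f k) e) = 0 := by
      rw [← Pseudoelement.comp_apply, ← hqv, Pseudoelement.comp_apply, he]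
      exact hb
    obtain ⟨x, hx0⟩ := Pseudoelement.pseudo_exact_of_exact hQex0 ((p.f k) e) h2
    have hx : (Q.d (k+1) k) x = (p.f k) e := hx0
    obtain ⟨e', he'⟩ := Pseudoelement.pseudo_surjective_of_epi (p.f (k+1)) x
    have h3 : (p.f k) e = (p.f k) (d1 e') := by
      rw [← Pseudoelement.comp_apply, hd1, ← p.comm (k+1) k, Pseudoelement.comp_apply, he', hx]
    obtain ⟨z, hz0, hzprop⟩ := Pseudoelement.sub_of_eq_image (p.f k) e (d1 e') h3
    have hqz : q z = b := by
      rw [← he]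
      apply hzprop
      rw [← Pseudoelement.comp_apply, cokernel.condition, Pseudoelement.zero_apply]
    obtain ⟨s0, hs00⟩ := Pseudoelement.pseudo_exact_of_exact (hdeg k).exact z hz0
    have hs0 : (i.f k) s0 = z := hs00
    refine ⟨σ.hom s0, ?_⟩
    have hiz : i₀ (σ.hom s0) = z := by
      erw [← Pseudoelement.comp_apply, hi₀, ← Category.assoc, Iso.hom_inv_id, Category.id_comp]
      exact hs0
    rw [Pseudoelement.comp_apply, hiz, hqz]
  obtain ⟨r', hr'⟩ := hY.2 (i₀ ≫ q) v hw' hmono hexact (hQ.2 (k-1))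
  have hcond : ∀ i' : ℤ, (ComplexShape.down ℤ).Rel i' k → E.d i' k ≫ q ≫ r' = 0 := by
    intro i' hrel
    obtain rfl : i' = k + 1 := by
      simp only [ComplexShape.down_Rel] at hrel; omega
    rw [← hd1, ← Category.assoc, cokernel.condition, zero_comp]
  refine ⟨mkHomToSingle (q ≫ r') hcond, ?_⟩
  ext
  rw [HomologicalComplex.comp_f, mkHomToSingle_f]
  have hif : i.f k = σ.hom ≫ i₀ := by rw [hi₀, Iso.hom_inv_id_assoc]
  rw [hif, HomologicalComplex.id_f]
  simp only [Category.assoc]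
  rw [reassoc_of% hr']
  simp

end SingleMem


section Star

open CategoryTheory.Abelian
open scoped Pseudoelement

lemma star (𝒳 𝒴 : Set 𝒜) {K : ChainComplex 𝒜 ℤ}
    (hK : K ∈ leftPerpSplit (rightPerpSplit (exCls 𝒳)))
    {Y : 𝒜} (hY : Y ∈ underline 𝒳 𝒴) (n : ℤ) (f : K.X n ⟶ Y)
    (hf : K.d (n+1) n ≫ f = 0) :
    ∃ t : K.X (n-1) ⟶ Y, K.d n (n-1) ≫ t = f := by
  have hcond : ∀ i : ℤ, (ComplexShape.down ℤ).Rel i n → K.d i n ≫ f = 0 := by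
    intro i hi
    obtain rfl : i = n + 1 := by simp only [ComplexShape.down_Rel] at hi; omega
    exact hf
  set φ : K ⟶ single𝒜 n Y := mkHomToSingle f hcond with hφ
  have hPB := pullbackSES (diskι n Y) (diskπ n Y) (diskιπ_w n Y) (diskSES n Y) φ
  obtain ⟨s, hs⟩ := hK _ _ _ hPB (single_mem 𝒳 𝒴 hY)
  set ψ : K ⟶ disk n Y := s ≫ pullback.fst (diskπ n Y) φ with hψ
  have hψπ : ψ ≫ diskπ n Y = φ := by
    rw [hψ, Category.assoc, pullback.condition, ← Category.assoc, hs, Category.id_comp]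
  refine ⟨ψ.f (n-1) ≫ (diskXIsoPrev n Y).hom, ?_⟩
  rw [← Category.assoc, ← ψ.comm n (n-1), Category.assoc, disk_d_comp_isoPrev]
  have h1 : ψ.f n ≫ biprod.fst = f ≫ (singleObjXSelf (ComplexShape.down ℤ) n Y).inv := by
    have h2 := congrArg (fun (h : K ⟶ single𝒜 n Y) => h.f n) hψπ
    simp only [HomologicalComplex.comp_f, diskπ_f] at h2
    rw [h2, hφ, mkHomToSingle_f]
  erw [← Category.assoc, h1]
  simp

lemma exact_of_K (𝒳 𝒴 : Set 𝒜) {K : ChainComplex 𝒜 ℤ}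
    (hK : K ∈ leftPerpSplit (rightPerpSplit (exCls 𝒳)))
    (henough : ∀ A : 𝒜, ∃ (Y : 𝒜) (i : A ⟶ Y), Y ∈ underline 𝒳 𝒴 ∧ Mono i)
    (n : ℤ) : K.ExactAt n := by
  obtain ⟨Y, u, hYu, hu⟩ := henough (cokernel (K.d (n+1) n))
  set π := cokernel.π (K.d (n+1) n) with hπ
  have hdesc : K.d (n+1) n ≫ K.d n (n-1) = 0 := K.d_comp_d _ _ _
  set c : cokernel (K.d (n+1) n) ⟶ K.X (n-1) := cokernel.desc _ (K.d n (n-1)) hdesc with hc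
  have hπc : π ≫ c = K.d n (n-1) := cokernel.π_desc _ _ _
  have hf0 : K.d (n+1) n ≫ (π ≫ u) = 0 := by
    rw [← Category.assoc, hπ, cokernel.condition, zero_comp]
  obtain ⟨t, ht⟩ := star 𝒳 𝒴 hK hYu n (π ≫ u) hf0
  have hct : c ≫ t = u := by
    rw [← cancel_epi π, ← Category.assoc, hπc, ht]
  have hcmono : Mono c := by
    have : Mono (c ≫ t) := by rw [hct]; exact hu
    exact mono_of_mono c t
  rw [HomologicalComplex.exactAt_iff' (K := K) (i := n+1) (j := n) (k := n-1)
    (by rw [ChainComplex.prev]) (by rw [ChainComplex.next])]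
  apply Pseudoelement.exact_of_pseudo_exact
  intro b hb
  have hb' : (K.d n (n-1)) b = 0 := hb
  have hπb : π b = 0 := by
    apply Pseudoelement.zero_of_map_zero c (Pseudoelement.pseudo_injective_of_mono c)
    erw [← Pseudoelement.comp_apply, hπc]
    exact hb'
  have hexπ : (ShortComplex.mk (K.d (n+1) n) π (cokernel.condition _)).Exact :=
    ShortComplex.exact_of_g_is_cokernel _ (cokernelIsCokernel _)
  obtain ⟨a, ha⟩ := Pseudoelement.pseudo_exact_of_exact hexπ b hπb
  exact ⟨a, ha⟩

lemma memX_of_K (𝒳 𝒴 : Set 𝒜) (hY : 𝒴 = rightPerpSplit 𝒳) {K : ChainComplex 𝒜 ℤ}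
    (hK : K ∈ leftPerpSplit (rightPerpSplit (exCls 𝒳))) (n : ℤ) :
    K.X n ∈ leftPerpSplit 𝒴 := by
  intro Y A i₁ p₁ w₁ hse₁ hYmem
  rw [hY] at hYmem
  set η : K ⟶ disk (n+1) (K.X n) :=
    toDisk (n+1) ((K.XIsoOfEq (show n+1-1 = n by omega)).hom) with hη
  have hPB := pullbackSES (diskMap (n+1) i₁) (diskMap (n+1) p₁) (diskMap_w (n+1) w₁)
    (diskMapSES hse₁ (n+1)) η
  obtain ⟨s, hs⟩ := hK _ _ _ hPB (disk_mem 𝒳 hYmem)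
  set θ : K ⟶ disk (n+1) A := s ≫ pullback.fst _ _ with hθ
  have hθcomm : θ ≫ diskMap (n+1) p₁ = η := by
    rw [hθ, Category.assoc, pullback.condition, ← Category.assoc, hs, Category.id_comp]
  refine ⟨(K.XIsoOfEq (show n = n+1-1 by omega)).hom ≫ θ.f (n+1-1) ≫
    (diskXIsoPrev (n+1) A).hom, ?_⟩
  have h2 := congrArg (fun (h : K ⟶ disk (n+1) (K.X n)) => h.f (n+1-1)) hθcomm
  simp only [HomologicalComplex.comp_f] at h2
  have h3 := congrArg (fun g => g ≫ (diskXIsoPrev (n+1) (K.X n)).hom) h2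
  rw [Category.assoc, diskXIsoPrev_natural, hη, toDisk_f_prev, ← Category.assoc] at h3
  simp only [Category.assoc] at h3 ⊢
  rw [h3]
  simp [HomologicalComplex.XIsoOfEq]

end Star

end Stmt16

/-- If `(𝒳, 𝒴)` is a cotorsion theory with `𝒳 = ^⊥𝒮` for some `𝒮 ⊆ 𝒴` and `𝒜` has
enough `𝒴̲` objects, then `(ex(𝒳), ex(𝒳)^⊥)` is a cotorsion theory in `Ch(𝒜)`. -/
theorem statement16 (𝒳 𝒴 : Set 𝒜)
    (hX : 𝒳 = leftPerpSplit 𝒴) (hY : 𝒴 = rightPerpSplit 𝒳)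
    (𝒮 : Set 𝒜) (h𝒮 : 𝒮 ⊆ 𝒴) (hX𝒮 : 𝒳 = leftPerpSplit 𝒮)
    (henough : ∀ A : 𝒜, ∃ (Y : 𝒜) (i : A ⟶ Y), Y ∈ underline 𝒳 𝒴 ∧ Mono i) :
    leftPerpSplit (rightPerpSplit (exCls 𝒳)) = exCls 𝒳 := by
  apply Set.Subset.antisymm
  · intro K hK
    refine ⟨fun n => Stmt16.exact_of_K 𝒳 𝒴 hK henough n, fun n => ?_⟩
    rw [hX]
    exact Stmt16.memX_of_K 𝒳 𝒴 hY hK n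
  · intro K hKmem Y E i p w hse hYperp
    obtain ⟨r, hr⟩ := hYperp i p w hse hKmem
    exact ⟨(ShortComplex.Splitting.ofExactOfRetraction _ hse.exact r hr hse.epi_g).s,
      (ShortComplex.Splitting.ofExactOfRetraction _ hse.exact r hr hse.epi_g).s_g⟩
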